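/- No full LDP for empirical means of a bounded observable along a drifted walk: let (S_n) be the simple random walk on ℤ started at 0 with constant up-probability p̄ > 1/2. Define blocks by c₁=1, d_n=(n+1)c_n, c_{n+1}=d_n², and f = indicator of ∪_n ⟦c_n, d_n⟧. Then ℓ_n(f) = (1/n)∑_{j=1}^n f(S_j) satisfies: inf_{ε>0} lim sup_{n→∞} (1/n) log P(|ℓ_n(f)−1| < ε) = 0, while inf_{ε>0} lim inf_{n→∞} (1/n) log P(|ℓ_n(f)−1| < ε) ≤ −Λ*(0) < 0, where Λ* is the Fenchel–Legendre transform of log(p̄ e^λ + (1−p̄)e^{−λ}). Hence (ℓ_n(f)) satisfies no large deviation principle. -/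

import Mathlib

open MeasureTheory Filter

/-- The block sequence `c₁ = 1`, `c_{n+1} = d_n² = ((n+1)·c_n)²`. -/
def cblock : ℕ → ℕ
  | 0 => 1
  | 1 => 1
  | (n + 2) => ((n + 2) * cblock (n + 1)) ^ 2

/-- The block sequence `d_n = (n+1)·c_n`. -/
def dblock (n : ℕ) : ℕ := (n + 1) * cblock n

open Classical in
/-- The bounded observable `f = 1_{∪_{n≥1} ⟦c_n, d_n⟧}`. -/
noncomputable def fobs (x : ℤ) : ℝ :=
  if ∃ n : ℕ, 1 ≤ n ∧ (cblock n : ℤ) ≤ x ∧ x ≤ (dblock n : ℤ) then 1 else 0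

open scoped ENNReal

lemma cblock_pos (n : ℕ) : 0 < cblock n := by
  induction n using cblock.induct with
  | case1 => simp [cblock]
  | case2 => simp [cblock]
  | case3 n ih => simp [cblock]; positivity

lemma dblock_pos (n : ℕ) : 0 < dblock n := by
  have := cblock_pos n; simp [dblock]; omega

lemma succ_le_dblock (n : ℕ) : n + 1 ≤ dblock n := by
  have := cblock_pos n
  calc n + 1 = (n+1) * 1 := by ring
  _ ≤ (n+1) * cblock n := by exact Nat.mul_le_mul_left _ this
  _ = dblock n := rfl

lemma cblock_succ (n : ℕ) (hn : 1 ≤ n) : cblock (n + 1) = dblock n ^ 2 := by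
  obtain ⟨m, rfl⟩ : ∃ m, n = m + 1 := ⟨n - 1, by omega⟩
  rfl

lemma cblock_le_succ (n : ℕ) : cblock n ≤ cblock (n + 1) := by
  match n with
  | 0 => simp [cblock]
  | (m+1) =>
    rw [cblock_succ (m+1) (by omega)]
    have h1 := cblock_pos (m+1)
    have h2 := dblock_pos (m+1)
    have : cblock (m+1) ≤ dblock (m+1) := by unfold dblock; nlinarith
    nlinarith

lemma cblock_mono : Monotone cblock := monotone_nat_of_le_succ cblock_le_succ

lemma cblock_le_dblock (n : ℕ) : cblock n ≤ dblock n := by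
  calc cblock n = 1 * cblock n := by ring
  _ ≤ (n+1) * cblock n := by exact Nat.mul_le_mul (by omega) le_rfl

lemma dblock_mono : Monotone dblock := by
  apply monotone_nat_of_le_succ
  intro n
  exact Nat.mul_le_mul (by omega) (cblock_le_succ n)

lemma fobs_nonneg (x : ℤ) : 0 ≤ fobs x := by
  unfold fobs; split <;> norm_num

lemma fobs_le_one (x : ℤ) : fobs x ≤ 1 := by
  unfold fobs; split <;> norm_num

lemma fobs_eq_one {x : ℤ} (h : ∃ n : ℕ, 1 ≤ n ∧ (cblock n : ℤ) ≤ x ∧ x ≤ (dblock n : ℤ)) :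
    fobs x = 1 := by unfold fobs; rw [if_pos h]

lemma fobs_exists {x : ℤ} (h : fobs x = 1) :
    ∃ n : ℕ, 1 ≤ n ∧ (cblock n : ℤ) ≤ x ∧ x ≤ (dblock n : ℤ) := by
  by_contra hc
  unfold fobs at h
  rw [if_neg hc] at h
  norm_num at h

section Analytic

variable {pb : ℝ} (h0 : 0 < pb) (h1 : pb < 1) (h2 : 1/2 < pb)

noncomputable def lam0 (pb : ℝ) : ℝ := Real.log (pb / (1 - pb)) / 2
noncomputable def qval (pb : ℝ) : ℝ := 2 * Real.sqrt (pb * (1 - pb))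

include h0 h1 in
lemma qval_pos : 0 < qval pb := by
  have : 0 < pb * (1 - pb) := by nlinarith
  unfold qval; positivity

include h0 h1 h2 in
lemma qval_lt_one : qval pb < 1 := by
  have h3 : 0 < 1 - pb := by linarith
  have hs : Real.sqrt (pb * (1 - pb)) < 1/2 := by
    rw [show (1:ℝ)/2 = Real.sqrt ((1/2)^2) by rw [Real.sqrt_sq]; norm_num]
    apply Real.sqrt_lt_sqrt (by positivity)
    nlinarith
  unfold qval; linarith

include h0 h1 h2 in
lemma lam0_pos : 0 < lam0 pb := by
  have h3 : 0 < 1 - pb := by linarith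
  have : (1:ℝ) < pb / (1 - pb) := by
    rw [lt_div_iff₀ h3]; linarith
  unfold lam0
  have := Real.log_pos this
  linarith

include h0 h1 in
lemma exp_lam0_sq : Real.exp (lam0 pb) ^ 2 = pb / (1 - pb) := by
  have h3 : 0 < 1 - pb := by linarith
  rw [← Real.exp_nat_mul]
  push_cast
  rw [show (2:ℝ) * lam0 pb = Real.log (pb / (1-pb)) by unfold lam0; ring]
  exact Real.exp_log (by positivity)

include h0 h1 in
lemma gval_lam0 : pb * Real.exp (-lam0 pb) + (1 - pb) * Real.exp (lam0 pb) = qval pb := by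
  have h3 : 0 < 1 - pb := by linarith
  have he := exp_lam0_sq h0 h1
  have hep : 0 < Real.exp (lam0 pb) := Real.exp_pos _
  have h3' : (1 - pb) ≠ 0 := by linarith
  have he' : Real.exp (lam0 pb) ^ 2 * (1 - pb) = pb := by
    field_simp at he; linarith
  have e1 : pb * Real.exp (-lam0 pb) = Real.sqrt (pb * (1 - pb)) := by
    rw [show Real.sqrt (pb * (1-pb)) = Real.sqrt ((pb * Real.exp (-lam0 pb))^2) from ?_,
      Real.sqrt_sq (by positivity)]
    congr 1
    rw [Real.exp_neg]
    field_simp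
    nlinarith [he']
  have e2 : (1 - pb) * Real.exp (lam0 pb) = Real.sqrt (pb * (1 - pb)) := by
    rw [show Real.sqrt (pb * (1-pb)) = Real.sqrt (((1-pb) * Real.exp (lam0 pb))^2) from ?_,
      Real.sqrt_sq (by positivity)]
    congr 1
    nlinarith [he']
  rw [e1, e2]; unfold qval; ring

include h0 h1 in
lemma qval_le_gval (l : ℝ) : qval pb ≤ pb * Real.exp l + (1 - pb) * Real.exp (-l) := by
  have h3 : 0 < 1 - pb := by linarith
  have ha : 0 < pb * Real.exp l := by positivity
  have hb : 0 < (1 - pb) * Real.exp (-l) := by positivity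
  have key : Real.sqrt (pb * (1 - pb)) ≤ (pb * Real.exp l + (1 - pb) * Real.exp (-l)) / 2 := by
    rw [show pb * (1 - pb) = (pb * Real.exp l) * ((1-pb) * Real.exp (-l)) by
      rw [Real.exp_neg]; field_simp]
    rw [show (pb * Real.exp l + (1 - pb) * Real.exp (-l)) / 2
        = Real.sqrt (((pb * Real.exp l + (1 - pb) * Real.exp (-l)) / 2)^2) by
      rw [Real.sqrt_sq (by positivity)]]
    apply Real.sqrt_le_sqrt
    nlinarith [sq_nonneg (pb * Real.exp l - (1-pb) * Real.exp (-l))]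
  unfold qval; linarith

include h0 h1 h2 in
lemma Lambda_eq : (⨆ l : ℝ, -(Real.log (pb * Real.exp l + (1 - pb) * Real.exp (-l))))
    = -Real.log (qval pb) := by
  have hq0 := qval_pos h0 h1
  apply le_antisymm
  · apply ciSup_le
    intro l
    have := qval_le_gval h0 h1 l
    have := Real.log_le_log hq0 this
    linarith
  · have : -Real.log (qval pb)
        = -(Real.log (pb * Real.exp (-lam0 pb) + (1 - pb) * Real.exp (-(-lam0 pb)))) := by
      rw [neg_neg, gval_lam0 h0 h1]
    rw [this]
    apply le_ciSup (f := fun l => -(Real.log (pb * Real.exp l + (1 - pb) * Real.exp (-l))))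
    refine ⟨-Real.log (qval pb), ?_⟩
    rintro x ⟨l, rfl⟩
    have := qval_le_gval h0 h1 l
    have := Real.log_le_log hq0 this
    simp only
    linarith

include h0 h1 h2 in
lemma Lambda_pos : 0 < ⨆ l : ℝ, -(Real.log (pb * Real.exp l + (1 - pb) * Real.exp (-l))) := by
  rw [Lambda_eq h0 h1 h2]
  have := Real.log_neg (qval_pos h0 h1) (qval_lt_one h0 h1 h2)
  linarith

end Analytic

section Prob

open ProbabilityTheory

variable {Ω : Type*} [MeasurableSpace Ω] (P : Measure Ω) [IsProbabilityMeasure P]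
  (pb : ℝ) (X : ℕ → Ω → ℤ)

def Good (X : ℕ → Ω → ℤ) : Set Ω := {ω | ∀ i, X i ω = 1 ∨ X i ω = -1}

noncomputable def gv (pb t : ℝ) : ℝ := pb * Real.exp t + (1 - pb) * Real.exp (-t)

variable {P pb X}

lemma sum_one_ne (hpb : pb ∈ Set.Ioo (0:ℝ) 1) :
    ENNReal.ofReal pb + ENNReal.ofReal (1 - pb) = 1 := by
  rw [← ENNReal.ofReal_add hpb.1.le (by linarith [hpb.2]), show pb + (1-pb) = 1 by ring]
  simp

lemma meas_step_union (hmeas : ∀ i, Measurable (X i))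
    (hdist : ∀ i, P {ω | X i ω = 1} = ENNReal.ofReal pb ∧
      P {ω | X i ω = -1} = ENNReal.ofReal (1 - pb))
    (hpb : pb ∈ Set.Ioo (0:ℝ) 1) (i : ℕ) :
    P ({ω | X i ω = 1} ∪ {ω | X i ω = -1}) = 1 := by
  have hd : Disjoint {ω | X i ω = 1} {ω | X i ω = -1} := by
    rw [Set.disjoint_left]; intro ω h1 h2
    simp only [Set.mem_setOf_eq] at h1 h2; omega
  have hm1 : MeasurableSet {ω | X i ω = 1} := (hmeas i) (measurableSet_singleton 1)
  have hm2 : MeasurableSet {ω | X i ω = -1} := (hmeas i) (measurableSet_singleton (-1))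
  rw [measure_union hd hm2, (hdist i).1, (hdist i).2, sum_one_ne hpb]

lemma good_ae (hmeas : ∀ i, Measurable (X i))
    (hdist : ∀ i, P {ω | X i ω = 1} = ENNReal.ofReal pb ∧
      P {ω | X i ω = -1} = ENNReal.ofReal (1 - pb))
    (hpb : pb ∈ Set.Ioo (0:ℝ) 1) :
    P (Good X)ᶜ = 0 := by
  have : (Good X)ᶜ = ⋃ i, ({ω | X i ω = 1} ∪ {ω | X i ω = -1})ᶜ := by
    ext ω
    simp only [Good, Set.mem_compl_iff, Set.mem_setOf_eq, Set.mem_iUnion, Set.mem_union,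
      not_forall, not_or]
  rw [this]
  apply measure_iUnion_null
  intro i
  have hm1 : MeasurableSet {ω | X i ω = 1} := (hmeas i) (measurableSet_singleton 1)
  have hm2 : MeasurableSet {ω | X i ω = -1} := (hmeas i) (measurableSet_singleton (-1))
  rw [prob_compl_eq_zero_iff (hm1.union hm2)]
  exact meas_step_union hmeas hdist hpb i

lemma sum_le_card_of_good {ω : Ω} (hω : ω ∈ Good X) (s : Finset ℕ) :
    (∑ i ∈ s, X i ω) ≤ (s.card : ℤ) := by
  calc (∑ i ∈ s, X i ω) ≤ ∑ i ∈ s, 1 := by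
        apply Finset.sum_le_sum
        intro i _
        rcases hω i with h | h <;> omega
  _ = (s.card : ℤ) := by simp

lemma abs_sum_le_card_of_good {ω : Ω} (hω : ω ∈ Good X) (s : Finset ℕ) :
    |∑ i ∈ s, X i ω| ≤ (s.card : ℤ) := by
  calc |∑ i ∈ s, X i ω| ≤ ∑ i ∈ s, |X i ω| := Finset.abs_sum_le_sum_abs _ _
  _ ≤ ∑ i ∈ s, 1 := by
        apply Finset.sum_le_sum
        intro i _
        rcases hω i with h | h <;> simp [h]
  _ = (s.card : ℤ) := by simp

lemma meas_cyl (hindep : ProbabilityTheory.iIndepFun X P)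
    (e : ℕ → ℤ) (s : Finset ℕ) :
    P (⋂ i ∈ s, {ω | X i ω = e i}) = ∏ i ∈ s, P {ω | X i ω = e i} := by
  have := hindep.measure_inter_preimage_eq_mul s
    (sets := fun i => {e i}) (fun i _ => measurableSet_singleton _)
  simpa only [Set.preimage, Set.mem_singleton_iff] using this

end Prob

section Prob2

open ProbabilityTheory

variable {Ω : Type*} [MeasurableSpace Ω] {P : Measure Ω} [IsProbabilityMeasure P]
  {pb : ℝ} {X : ℕ → Ω → ℤ}

lemma mgf_step (hmeas : ∀ i, Measurable (X i))
    (hdist : ∀ i, P {ω | X i ω = 1} = ENNReal.ofReal pb ∧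
      P {ω | X i ω = -1} = ENNReal.ofReal (1 - pb))
    (hpb : pb ∈ Set.Ioo (0:ℝ) 1) (i : ℕ) (t : ℝ) :
    mgf (fun ω => (X i ω : ℝ)) P t = gv pb t := by
  have hm1 : MeasurableSet {ω | X i ω = 1} := (hmeas i) (measurableSet_singleton 1)
  have hm2 : MeasurableSet {ω | X i ω = -1} := (hmeas i) (measurableSet_singleton (-1))
  have hae : ∀ᵐ ω ∂P, ω ∈ ({ω | X i ω = 1} ∪ {ω | X i ω = -1}) := by
    rw [ae_iff]
    have : {ω | ¬ ω ∈ ({ω | X i ω = 1} ∪ {ω | X i ω = -1})}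
        = ({ω | X i ω = 1} ∪ {ω | X i ω = -1})ᶜ := rfl
    rw [this, prob_compl_eq_zero_iff (hm1.union hm2)]
    exact meas_step_union hmeas hdist hpb i
  have hcong : (fun ω => Real.exp (t * (X i ω : ℝ)))
      =ᵐ[P] (fun ω => ({ω | X i ω = 1}).indicator (fun _ => Real.exp t) ω
        + ({ω | X i ω = -1}).indicator (fun _ => Real.exp (-t)) ω) := by
    filter_upwards [hae] with ω hω
    rcases hω with h | h
    · have hh : X i ω = 1 := h
      have hmem : ω ∈ {ω | X i ω = 1} := h
      have h' : ω ∉ {ω | X i ω = -1} := by simp only [Set.mem_setOf_eq]; omega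
      rw [Set.indicator_of_mem hmem, Set.indicator_of_notMem h', hh]
      norm_num
    · have hh : X i ω = -1 := h
      have hmem : ω ∈ {ω | X i ω = -1} := h
      have h' : ω ∉ {ω | X i ω = 1} := by simp only [Set.mem_setOf_eq]; omega
      rw [Set.indicator_of_notMem h', Set.indicator_of_mem hmem, hh]
      norm_num
  unfold mgf
  rw [integral_congr_ae hcong, integral_add
    ((integrable_const _).indicator hm1) ((integrable_const _).indicator hm2),
    integral_indicator_const _ hm1, integral_indicator_const _ hm2,
    measureReal_def, measureReal_def, (hdist i).1, (hdist i).2, ENNReal.toReal_ofReal hpb.1.le,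
    ENNReal.toReal_ofReal (by linarith [hpb.2])]
  simp only [smul_eq_mul, gv]

lemma mgf_window (hmeas : ∀ i, Measurable (X i))
    (hindep : ProbabilityTheory.iIndepFun X P)
    (hdist : ∀ i, P {ω | X i ω = 1} = ENNReal.ofReal pb ∧
      P {ω | X i ω = -1} = ENNReal.ofReal (1 - pb))
    (hpb : pb ∈ Set.Ioo (0:ℝ) 1) (s : Finset ℕ) (t : ℝ) :
    mgf (fun ω => ∑ i ∈ s, (X i ω : ℝ)) P t = gv pb t ^ s.card := by
  have hindepY : ProbabilityTheory.iIndepFun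
      (fun i => fun ω => ((X i ω : ℤ) : ℝ)) P := by
    exact hindep.comp (fun _ => (Int.cast : ℤ → ℝ)) (fun _ => fun _ _ => trivial)
  have hmeasY : ∀ i, Measurable (fun ω => ((X i ω : ℤ) : ℝ)) :=
    fun i => (show Measurable (fun x : ℤ => (x:ℝ)) from fun _ _ => trivial).comp (hmeas i)
  have := hindepY.mgf_sum hmeasY s (t := t)
  have heq : (∑ i ∈ s, (fun ω => ((X i ω : ℤ) : ℝ))) = fun ω => ∑ i ∈ s, (X i ω : ℝ) := by
    funext ω
    simp [Finset.sum_apply]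
  rw [heq] at this
  rw [this]
  rw [Finset.prod_congr rfl (fun i _ => mgf_step hmeas hdist hpb i t)]
  simp [Finset.prod_const]

lemma int_exp (hmeas : ∀ i, Measurable (X i))
    (hdist : ∀ i, P {ω | X i ω = 1} = ENNReal.ofReal pb ∧
      P {ω | X i ω = -1} = ENNReal.ofReal (1 - pb))
    (hpb : pb ∈ Set.Ioo (0:ℝ) 1) (s : Finset ℕ) (t : ℝ) :
    Integrable (fun ω => Real.exp (t * ∑ i ∈ s, (X i ω : ℝ))) P := by
  apply Integrable.mono' (integrable_const (Real.exp (|t| * s.card)))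
  · apply Measurable.aestronglyMeasurable
    apply Real.measurable_exp.comp
    apply Measurable.const_mul
    exact Finset.measurable_sum s (fun i _ =>
      (show Measurable (fun x : ℤ => (x:ℝ)) from fun _ _ => trivial).comp (hmeas i))
  · have hg : ∀ᵐ ω ∂P, ω ∈ Good X := by
      rw [ae_iff]
      exact good_ae hmeas hdist hpb
    filter_upwards [hg] with ω hω
    rw [Real.norm_eq_abs, Real.abs_exp, Real.exp_le_exp]
    have habs : |∑ i ∈ s, (X i ω : ℝ)| ≤ (s.card : ℝ) := by
      have := abs_sum_le_card_of_good hω s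
      have h2 : |(∑ i ∈ s, X i ω : ℤ)| ≤ (s.card : ℤ) := this
      have hc : (∑ i ∈ s, (X i ω : ℝ)) = ((∑ i ∈ s, X i ω : ℤ) : ℝ) := by push_cast; rfl
      rw [hc, ← Int.cast_abs]
      exact_mod_cast h2
    calc t * ∑ i ∈ s, (X i ω : ℝ) ≤ |t * ∑ i ∈ s, (X i ω : ℝ)| := le_abs_self _
    _ = |t| * |∑ i ∈ s, (X i ω : ℝ)| := abs_mul _ _
    _ ≤ |t| * s.card := by
        apply mul_le_mul_of_nonneg_left habs (abs_nonneg t)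

lemma chernoff (hmeas : ∀ i, Measurable (X i))
    (hindep : ProbabilityTheory.iIndepFun X P)
    (hdist : ∀ i, P {ω | X i ω = 1} = ENNReal.ofReal pb ∧
      P {ω | X i ω = -1} = ENNReal.ofReal (1 - pb))
    (hpb : pb ∈ Set.Ioo (0:ℝ) 1) (h2 : 1/2 < pb) (s : Finset ℕ) (a : ℝ) :
    (P {ω | (∑ i ∈ s, (X i ω : ℝ)) ≤ a}).toReal
      ≤ Real.exp (lam0 pb * a) * qval pb ^ s.card := by
  have h0 := hpb.1
  have h1 := hpb.2
  have hl := lam0_pos h0 h1 h2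
  have := measure_le_le_exp_mul_mgf (μ := P) (X := fun ω => ∑ i ∈ s, (X i ω : ℝ))
    (t := -lam0 pb) a (by linarith) (int_exp hmeas hdist hpb s _)
  rw [mgf_window hmeas hindep hdist hpb s (-lam0 pb)] at this
  have hgq : gv pb (-lam0 pb) = qval pb := by
    unfold gv
    rw [neg_neg]
    exact gval_lam0 h0 h1
  rw [hgq] at this
  simpa [measureReal_def] using this

end Prob2

section Prob3

open ProbabilityTheory

variable {Ω : Type*} [MeasurableSpace Ω] {P : Measure Ω} [IsProbabilityMeasure P]
  {pb : ℝ} {X : ℕ → Ω → ℤ}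

def eventSet (P : Measure Ω) (X : ℕ → Ω → ℤ) (ε : ℝ) (n : ℕ) : Set Ω :=
  {ω | |(1 / (n : ℝ)) *
    (∑ j ∈ Finset.Icc 1 n, fobs (∑ i ∈ Finset.range j, X i ω)) - 1| < ε}

noncomputable def rate (P : Measure Ω) (X : ℕ → Ω → ℤ) (ε : ℝ) (n : ℕ) : ℝ :=
  (1 / (n : ℝ)) * Real.log (P (eventSet P X ε n)).toReal

def epath (i : ℕ) : ℤ := if i = 0 then 1 else if i % 2 = 1 then 1 else -1

lemma epath_sum (j : ℕ) (hj : 1 ≤ j) :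
    (∑ i ∈ Finset.range j, epath i) = if j % 2 = 1 then 1 else 2 := by
  induction j with
  | zero => omega
  | succ m ih =>
    rcases Nat.eq_or_lt_of_le hj with h | h
    · simp [← h, epath]
    · have hm : 1 ≤ m := by omega
      rw [Finset.sum_range_succ, ih hm]
      have : epath m = if m % 2 = 1 then 1 else -1 := by
        unfold epath
        rw [if_neg (by omega)]
      rw [this]
      rcases Nat.even_or_odd m with he | ho
      · have h1 : m % 2 = 0 := Nat.even_iff.mp he
        have h2 : (m+1) % 2 = 1 := by omega
        rw [if_neg (by omega), if_pos h2, if_neg (by omega)]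
        ring
      · have h1 : m % 2 = 1 := Nat.odd_iff.mp ho
        have h2 : (m+1) % 2 = 0 := by omega
        rw [if_pos h1, if_pos h1, if_neg (by omega)]
        ring

lemma rate_le_zero (ε : ℝ) (n : ℕ) : rate P X ε n ≤ 0 := by
  unfold rate
  apply mul_nonpos_of_nonneg_of_nonpos
  · positivity
  · apply Real.log_nonpos
    · exact ENNReal.toReal_nonneg
    · have h1 : P (eventSet P X ε n) ≤ 1 := prob_le_one
      have := ENNReal.toReal_mono (a := P (eventSet P X ε n)) (b := 1) (by simp) h1
      simpa using this

lemma log_le_rate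
    (hindep : ProbabilityTheory.iIndepFun X P)
    (hdist : ∀ i, P {ω | X i ω = 1} = ENNReal.ofReal pb ∧
      P {ω | X i ω = -1} = ENNReal.ofReal (1 - pb))
    (hpb : pb ∈ Set.Ioo (0:ℝ) 1) (hpb2 : 1/2 < pb)
    {ε : ℝ} (hε : 0 < ε) (n : ℕ) :
    Real.log (1 - pb) ≤ rate P X ε n := by
  have h1pb : 0 < 1 - pb := by linarith [hpb.2]
  have hlog : Real.log (1 - pb) < 0 := Real.log_neg h1pb (by linarith [hpb.1])
  rcases Nat.eq_zero_or_pos n with rfl | hn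
  · unfold rate
    norm_num
    linarith
  -- the oscillating path event
  have hsub : (⋂ i ∈ Finset.range n, {ω | X i ω = epath i}) ⊆ eventSet P X ε n := by
    intro ω hω
    simp only [Set.mem_iInter, Set.mem_setOf_eq] at hω
    have hwalk : ∀ j ∈ Finset.Icc 1 n, fobs (∑ i ∈ Finset.range j, X i ω) = 1 := by
      intro j hj
      simp only [Finset.mem_Icc] at hj
      have : (∑ i ∈ Finset.range j, X i ω) = ∑ i ∈ Finset.range j, epath i := by
        apply Finset.sum_congr rfl
        intro i hi
        simp only [Finset.mem_range] at hi
        exact hω i (Finset.mem_range.mpr (by omega))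
      rw [this, epath_sum j hj.1]
      apply fobs_eq_one
      refine ⟨1, le_refl 1, ?_, ?_⟩
      · show (cblock 1 : ℤ) ≤ _
        rw [show cblock 1 = 1 from rfl]
        split <;> omega
      · show _ ≤ (dblock 1 : ℤ)
        rw [show dblock 1 = 2 from rfl]
        split <;> omega
    have hsum : (∑ j ∈ Finset.Icc 1 n, fobs (∑ i ∈ Finset.range j, X i ω)) = n := by
      rw [Finset.sum_congr rfl hwalk]
      simp [Nat.card_Icc]
    show ω ∈ eventSet P X ε n
    unfold eventSet
    simp only [Set.mem_setOf_eq]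
    rw [hsum]
    have hn' : (n : ℝ) ≠ 0 := Nat.cast_ne_zero.mpr (by omega)
    rw [show (1 / (n:ℝ)) * n - 1 = 0 by field_simp; norm_num]
    simpa using hε
  have hcylP : ENNReal.ofReal ((1 - pb)^n) ≤ P (⋂ i ∈ Finset.range n, {ω | X i ω = epath i}) := by
    rw [meas_cyl hindep epath (Finset.range n)]
    have : ∀ i ∈ Finset.range n, ENNReal.ofReal (1 - pb) ≤ P {ω | X i ω = epath i} := by
      intro i _
      unfold epath
      split
      · rw [(hdist i).1]
        exact ENNReal.ofReal_le_ofReal (by linarith [hpb.1, hpb2])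
      · split
        · rw [(hdist i).1]
          exact ENNReal.ofReal_le_ofReal (by linarith [hpb.1, hpb2])
        · rw [(hdist i).2]
    calc ENNReal.ofReal ((1 - pb)^n) = (ENNReal.ofReal (1 - pb))^n := by
          rw [ENNReal.ofReal_pow h1pb.le]
    _ = ∏ _i ∈ Finset.range n, ENNReal.ofReal (1 - pb) := by simp
    _ ≤ ∏ i ∈ Finset.range n, P {ω | X i ω = epath i} := Finset.prod_le_prod' this
  have hP : ENNReal.ofReal ((1 - pb)^n) ≤ P (eventSet P X ε n) :=
    le_trans hcylP (measure_mono hsub)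
  have hPreal : (1 - pb)^n ≤ (P (eventSet P X ε n)).toReal := by
    have := ENNReal.toReal_mono (measure_ne_top P _) hP
    rwa [ENNReal.toReal_ofReal (by positivity)] at this
  unfold rate
  have hlogP : (n : ℝ) * Real.log (1 - pb) ≤ Real.log (P (eventSet P X ε n)).toReal := by
    calc (n : ℝ) * Real.log (1 - pb) = Real.log ((1 - pb)^n) := by
          rw [Real.log_pow]
    _ ≤ Real.log (P (eventSet P X ε n)).toReal :=
          Real.log_le_log (by positivity) hPreal
  have hn' : (0:ℝ) < (n : ℝ) := Nat.cast_pos.mpr hn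
  rw [show Real.log (1-pb) = (1/(n:ℝ)) * ((n:ℝ) * Real.log (1-pb)) by field_simp]
  apply mul_le_mul_of_nonneg_left hlogP (by positivity)

end Prob3

section Prob4

open ProbabilityTheory

variable {Ω : Type*} [MeasurableSpace Ω] {P : Measure Ω} [IsProbabilityMeasure P]
  {pb : ℝ} {X : ℕ → Ω → ℤ}

lemma geom_tail {q : ℝ} (h0 : 0 ≤ q) (h1 : q < 1) (N : ℕ) :
    ∑ j ∈ Finset.Icc 1 N, q^j ≤ q/(1-q) := by
  have hq : (0:ℝ) < 1 - q := by linarith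
  have hne : (1:ℝ) - q ≠ 0 := ne_of_gt hq
  have hins : Finset.range (N+1) = insert 0 (Finset.Icc 1 N) := by
    ext x; simp only [Finset.mem_range, Finset.mem_insert, Finset.mem_Icc]; omega
  have h2 : (1:ℝ) + ∑ j ∈ Finset.Icc 1 N, q^j = ∑ j ∈ Finset.range (N+1), q^j := by
    rw [hins, Finset.sum_insert (by simp)]
    norm_num
  have h3 : ∑ j ∈ Finset.range (N+1), q^j ≤ 1/(1-q) := by
    rw [geom_sum_eq (ne_of_lt h1) (N+1)]
    have hkey : (q^(N+1) - 1)/(q-1) = (1 - q^(N+1))/(1-q) := by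
      rw [div_eq_div_iff (by intro h; apply hne; linarith [sub_eq_zero.mp h]) hne]
      ring
    rw [hkey]
    apply (div_le_div_iff_of_pos_right hq).mpr
    nlinarith [pow_nonneg h0 (N+1)]
  have he : q/(1-q) = 1/(1-q) - 1 := by field_simp; ring
  linarith

lemma stay_half (hmeas : ∀ i, Measurable (X i))
    (hindep : ProbabilityTheory.iIndepFun X P)
    (hdist : ∀ i, P {ω | X i ω = 1} = ENNReal.ofReal pb ∧
      P {ω | X i ω = -1} = ENNReal.ofReal (1 - pb))
    (hpb : pb ∈ Set.Ioo (0:ℝ) 1) (hpb2 : 1/2 < pb) (r₀ : ℕ)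
    (hr₀ : Real.exp (-(lam0 pb) * (r₀+1)) * (qval pb/(1-qval pb)) ≤ 1/2) (m N : ℕ) :
    (1:ℝ≥0∞)/2 ≤ P (⋂ j ∈ Finset.Icc 1 N, {ω | -((r₀:ℤ)) ≤ ∑ i ∈ Finset.Ico m (m+j), X i ω}) := by
  have hq0 := qval_pos hpb.1 hpb.2
  have hq1 := qval_lt_one hpb.1 hpb.2 hpb2
  set B := ⋂ j ∈ Finset.Icc 1 N, {ω | -((r₀:ℤ)) ≤ ∑ i ∈ Finset.Ico m (m+j), X i ω} with hB
  have hmB : MeasurableSet B := by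
    apply Finset.measurableSet_biInter
    intro j _
    have : Measurable (fun ω => ∑ i ∈ Finset.Ico m (m+j), X i ω) :=
      Finset.measurable_sum _ (fun i _ => hmeas i)
    exact measurableSet_le measurable_const this
  have hsub : Bᶜ ⊆ ⋃ j ∈ Finset.Icc 1 N,
      {ω | ∑ i ∈ Finset.Ico m (m+j), X i ω ≤ -((r₀:ℤ)) - 1} := by
    intro ω hω
    simp only [hB, Set.compl_iInter, Set.mem_iUnion, Set.mem_compl_iff, Set.mem_setOf_eq] at hω
    obtain ⟨j, hj, hlt⟩ := hω
    exact Set.mem_biUnion hj (by simp only [Set.mem_setOf_eq]; omega)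
  have hcompl : P Bᶜ ≤ 1/2 := by
    calc P Bᶜ ≤ P (⋃ j ∈ Finset.Icc 1 N,
        {ω | ∑ i ∈ Finset.Ico m (m+j), X i ω ≤ -((r₀:ℤ)) - 1}) := measure_mono hsub
    _ ≤ ∑ j ∈ Finset.Icc 1 N, P {ω | ∑ i ∈ Finset.Ico m (m+j), X i ω ≤ -((r₀:ℤ)) - 1} :=
        measure_biUnion_finset_le _ _
    _ ≤ ∑ j ∈ Finset.Icc 1 N,
        ENNReal.ofReal (Real.exp (-(lam0 pb) * (r₀+1)) * qval pb ^ j) := by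
        apply Finset.sum_le_sum
        intro j _
        have hset : {ω | ∑ i ∈ Finset.Ico m (m+j), X i ω ≤ -((r₀:ℤ)) - 1}
            = {ω | (∑ i ∈ Finset.Ico m (m+j), (X i ω : ℝ)) ≤ ((-(r₀:ℝ) - 1))} := by
          ext ω
          simp only [Set.mem_setOf_eq]
          rw [show (∑ i ∈ Finset.Ico m (m+j), (X i ω : ℝ))
              = ((∑ i ∈ Finset.Ico m (m+j), X i ω : ℤ) : ℝ) by push_cast; rfl]
          constructor
          · intro h
            calc ((∑ i ∈ Finset.Ico m (m+j), X i ω : ℤ) : ℝ)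
                ≤ ((-(r₀:ℤ) - 1 : ℤ) : ℝ) := by exact_mod_cast h
            _ = -(r₀:ℝ) - 1 := by push_cast; ring
          · intro h
            have : ((∑ i ∈ Finset.Ico m (m+j), X i ω : ℤ) : ℝ) ≤ ((-(r₀:ℤ) - 1 : ℤ) : ℝ) := by
              convert h using 2
              push_cast; ring
            exact_mod_cast this
        rw [hset]
        apply ENNReal.le_ofReal_iff_toReal_le (measure_ne_top _ _) (by positivity) |>.mpr
        have := chernoff hmeas hindep hdist hpb hpb2 (Finset.Ico m (m+j)) (-(r₀:ℝ) - 1)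
        rw [Nat.card_Ico] at this
        have hcard : m + j - m = j := by omega
        rw [hcard] at this
        calc (P {ω | (∑ i ∈ Finset.Ico m (m+j), (X i ω : ℝ)) ≤ (-(r₀:ℝ) - 1)}).toReal
            ≤ Real.exp (lam0 pb * (-(r₀:ℝ) - 1)) * qval pb ^ j := this
        _ = Real.exp (-(lam0 pb) * (r₀+1)) * qval pb ^ j := by ring_nf
    _ = ENNReal.ofReal (∑ j ∈ Finset.Icc 1 N,
          Real.exp (-(lam0 pb) * (r₀+1)) * qval pb ^ j) := by
        rw [ENNReal.ofReal_sum_of_nonneg]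
        intro j _
        positivity
    _ ≤ ENNReal.ofReal (1/2) := by
        apply ENNReal.ofReal_le_ofReal
        rw [← Finset.mul_sum]
        calc Real.exp (-(lam0 pb) * (r₀+1)) * ∑ j ∈ Finset.Icc 1 N, qval pb ^ j
            ≤ Real.exp (-(lam0 pb) * (r₀+1)) * (qval pb/(1 - qval pb)) := by
              apply mul_le_mul_of_nonneg_left (geom_tail hq0.le hq1 N) (Real.exp_nonneg _)
        _ ≤ 1/2 := hr₀
    _ = 1/2 := by
        rw [show (1:ℝ)/2 = (2:ℝ)⁻¹ by norm_num, ENNReal.ofReal_inv_of_pos (by norm_num)]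
        norm_num
  have h1 : (1:ℝ≥0∞) - P B ≤ 1/2 := by
    rw [← prob_compl_eq_one_sub hmB]
    exact hcompl
  have h2 : (1:ℝ≥0∞) ≤ 1/2 + P B := by
    calc (1:ℝ≥0∞) = (1 - P B) + P B := by
          rw [tsub_add_cancel_of_le prob_le_one]
    _ ≤ 1/2 + P B := by gcongr
  calc (1:ℝ≥0∞)/2 = 1 - 1/2 := by rw [ENNReal.sub_half (by norm_num)]
  _ ≤ (1/2 + P B) - 1/2 := by exact tsub_le_tsub_right h2 _
  _ = P B := by rw [ENNReal.add_sub_cancel_left (by norm_num)]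

lemma exists_r0 (hpb : pb ∈ Set.Ioo (0:ℝ) 1) (hpb2 : 1/2 < pb) :
    ∃ r : ℕ, Real.exp (-(lam0 pb) * (r+1)) * (qval pb/(1-qval pb)) ≤ 1/2 := by
  have hl := lam0_pos hpb.1 hpb.2 hpb2
  have hq0 := qval_pos hpb.1 hpb.2
  have hq1 := qval_lt_one hpb.1 hpb.2 hpb2
  have hC : 0 < qval pb / (1 - qval pb) := by
    apply div_pos hq0; linarith
  set a := Real.exp (-(lam0 pb)) with ha
  have ha0 : 0 ≤ a := Real.exp_nonneg _
  have ha1 : a < 1 := by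
    rw [ha, Real.exp_lt_one_iff]
    linarith
  have hpow : Filter.Tendsto (fun r : ℕ => a ^ (r+1)) Filter.atTop (nhds 0) :=
    (tendsto_pow_atTop_nhds_zero_of_lt_one ha0 ha1).comp (Filter.tendsto_add_atTop_nat 1)
  have hev : ∀ᶠ r : ℕ in Filter.atTop,
      a ^ (r+1) < (1/2) / (qval pb / (1 - qval pb)) := by
    apply hpow.eventually_lt_const
    positivity
  obtain ⟨r, hr⟩ := hev.exists
  refine ⟨r, ?_⟩
  have hexp : Real.exp (-(lam0 pb) * (r+1)) = a ^ (r+1) := by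
    rw [ha, ← Real.exp_nat_mul]
    congr 1
    push_cast
    ring
  rw [hexp]
  rw [lt_div_iff₀ hC] at hr
  linarith

end Prob4

section Prob5

open ProbabilityTheory

variable {Ω : Type*} [MeasurableSpace Ω] {P : Measure Ω} [IsProbabilityMeasure P]
  {pb : ℝ} {X : ℕ → Ω → ℤ}

lemma incl1 {ω : Ω} (hg : ω ∈ Good X) (k r₀ : ℕ) (hk : 1 ≤ k)
    (hA : ∀ i < cblock k + r₀, X i ω = 1)
    (hB : ∀ j, 1 ≤ j → j ≤ dblock k - (cblock k + r₀) →
      -((r₀:ℤ)) ≤ ∑ i ∈ Finset.Ico (cblock k + r₀) (cblock k + r₀ + j), X i ω)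
    (hmn : cblock k + r₀ ≤ dblock k)
    {ε : ℝ} (hεm : (cblock k + r₀ : ℝ) < ε * dblock k) :
    ω ∈ eventSet P X ε (dblock k) := by
  set m := cblock k + r₀ with hm
  set n := dblock k with hn
  have hn0 : 0 < n := dblock_pos k
  have hnR : (0:ℝ) < n := by exact_mod_cast hn0
  have key : ∀ j ∈ Finset.Icc (m+1) n, fobs (∑ i ∈ Finset.range j, X i ω) = 1 := by
    intro j hj
    simp only [Finset.mem_Icc] at hj
    have hsplit : (∑ i ∈ Finset.range j, X i ω)
        = (∑ i ∈ Finset.range m, X i ω) + ∑ i ∈ Finset.Ico m j, X i ω := by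
      rw [Finset.range_eq_Ico]
      rw [Finset.range_eq_Ico]; exact (Finset.sum_Ico_consecutive (fun i => X i ω) (Nat.zero_le m) (show m ≤ j by omega)).symm
    have hfirst : (∑ i ∈ Finset.range m, X i ω) = m := by
      rw [Finset.sum_congr rfl (fun i hi => hA i (Finset.mem_range.mp hi))]
      simp
    have hsecond : -((r₀:ℤ)) ≤ ∑ i ∈ Finset.Ico m j, X i ω := by
      have := hB (j - m) (by omega) (by omega)
      rwa [show m + (j - m) = j by omega] at this
    have hlow : (cblock k : ℤ) ≤ ∑ i ∈ Finset.range j, X i ω := by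
      rw [hsplit, hfirst]
      have : ((m:ℤ)) - r₀ = (cblock k : ℤ) := by rw [hm]; push_cast; ring
      omega
    have hhigh : (∑ i ∈ Finset.range j, X i ω) ≤ (dblock k : ℤ) := by
      calc (∑ i ∈ Finset.range j, X i ω) ≤ ((Finset.range j).card : ℤ) :=
            sum_le_card_of_good hg _
      _ = (j : ℤ) := by simp
      _ ≤ (dblock k : ℤ) := by exact_mod_cast hj.2
    exact fobs_eq_one ⟨k, hk, hlow, hhigh⟩
  have hsum_low : ((n:ℝ) - m) ≤ ∑ j ∈ Finset.Icc 1 n, fobs (∑ i ∈ Finset.range j, X i ω) := by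
    have hsub : Finset.Icc (m+1) n ⊆ Finset.Icc 1 n := by
      intro x hx
      simp only [Finset.mem_Icc] at *
      omega
    calc ((n:ℝ) - m) = ((Finset.Icc (m+1) n).card : ℝ) := by
          rw [Nat.card_Icc]
          have : n + 1 - (m + 1) = n - m := by omega
          rw [this]
          push_cast [hmn]
          ring
    _ = ∑ j ∈ Finset.Icc (m+1) n, fobs (∑ i ∈ Finset.range j, X i ω) := by
          rw [Finset.sum_congr rfl key]
          simp
    _ ≤ ∑ j ∈ Finset.Icc 1 n, fobs (∑ i ∈ Finset.range j, X i ω) := by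
          apply Finset.sum_le_sum_of_subset_of_nonneg hsub
          intro j _ _
          exact fobs_nonneg _
  have hsum_high : (∑ j ∈ Finset.Icc 1 n, fobs (∑ i ∈ Finset.range j, X i ω)) ≤ n := by
    calc (∑ j ∈ Finset.Icc 1 n, fobs (∑ i ∈ Finset.range j, X i ω))
        ≤ ∑ j ∈ Finset.Icc 1 n, 1 := Finset.sum_le_sum (fun j _ => fobs_le_one _)
    _ = ((Finset.Icc 1 n).card : ℝ) := by simp
    _ = n := by simp [Nat.card_Icc]
  show ω ∈ eventSet P X ε n
  unfold eventSet
  simp only [Set.mem_setOf_eq]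
  set SF := ∑ j ∈ Finset.Icc 1 n, fobs (∑ i ∈ Finset.range j, X i ω) with hSF
  rw [abs_lt]
  constructor
  · have h1 : (1/(n:ℝ)) * ((n:ℝ) - m) ≤ (1/(n:ℝ)) * SF :=
      mul_le_mul_of_nonneg_left hsum_low (by positivity)
    have h2 : (1/(n:ℝ)) * ((n:ℝ) - m) = 1 - m/n := by field_simp
    have h3 : (m:ℝ)/n < ε := by
      rw [div_lt_iff₀ hnR]
      calc (m:ℝ) = (cblock k : ℝ) + r₀ := by rw [hm]; push_cast; ring
      _ < ε * dblock k := hεm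
      _ = ε * n := by rw [hn]
    nlinarith
  · have h1 : (1/(n:ℝ)) * SF ≤ (1/(n:ℝ)) * n :=
      mul_le_mul_of_nonneg_left hsum_high (by positivity)
    have h2 : (1/(n:ℝ)) * n = 1 := by field_simp
    have hε : 0 < ε := by
      by_contra h
      push_neg at h
      have : ε * (dblock k : ℝ) ≤ 0 := mul_nonpos_of_nonpos_of_nonneg h (by positivity)
      have : (0:ℝ) ≤ (m:ℝ) := by positivity
      linarith
    linarith

end Prob5

section Prob6

open ProbabilityTheory

variable {Ω : Type*} [MeasurableSpace Ω] {P : Measure Ω} [IsProbabilityMeasure P]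
  {pb : ℝ} {X : ℕ → Ω → ℤ}

lemma rate_dblock_lb (hmeas : ∀ i, Measurable (X i))
    (hindep : ProbabilityTheory.iIndepFun X P)
    (hdist : ∀ i, P {ω | X i ω = 1} = ENNReal.ofReal pb ∧
      P {ω | X i ω = -1} = ENNReal.ofReal (1 - pb))
    (hpb : pb ∈ Set.Ioo (0:ℝ) 1) (hpb2 : 1/2 < pb) (r₀ : ℕ)
    (hr₀ : Real.exp (-(lam0 pb) * (r₀+1)) * (qval pb/(1-qval pb)) ≤ 1/2)
    (k : ℕ) (hk : 1 ≤ k) (hmn : cblock k + r₀ ≤ dblock k)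
    {ε : ℝ} (hεm : (cblock k + r₀ : ℝ) < ε * dblock k) :
    ((cblock k + r₀ : ℝ) * Real.log pb + Real.log (1/2)) * (1/(dblock k : ℝ))
      ≤ rate P X ε (dblock k) := by
  set m := cblock k + r₀ with hm
  set n := dblock k with hn
  have hmltn : m ≤ n := hmn
  set N := n - m with hN
  set A := ⋂ i ∈ Finset.range m, {ω | X i ω = 1} with hA
  set B := ⋂ j ∈ Finset.Icc 1 N, {ω | -((r₀:ℤ)) ≤ ∑ i ∈ Finset.Ico m (m+j), X i ω} with hB
  -- P A = (ofReal pb) ^ m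
  have hPA : P A = (ENNReal.ofReal pb) ^ m := by
    rw [hA, meas_cyl hindep (fun _ => 1) (Finset.range m)]
    rw [Finset.prod_congr rfl (fun i _ => (hdist i).1)]
    simp
  have hPB : (1:ℝ≥0∞)/2 ≤ P B := stay_half hmeas hindep hdist hpb hpb2 r₀ hr₀ m N
  -- independence
  have hdisj : Disjoint (Finset.range m) (Finset.Ico m n) := by
    rw [Finset.disjoint_left]
    intro x hx hx'
    simp only [Finset.mem_range, Finset.mem_Ico] at hx hx'
    omega
  have hIF := hindep.indepFun_finset (Finset.range m) (Finset.Ico m n) hdisj hmeas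
  set MA : Set ((i : (Finset.range m : Finset ℕ)) → ℤ) := {v | ∀ i, v i = 1} with hMA
  set MB : Set ((i : (Finset.Ico m n : Finset ℕ)) → ℤ) :=
    ⋂ j ∈ Finset.Icc 1 N, {v | -((r₀:ℤ)) ≤
      ∑ i ∈ Finset.univ.filter (fun i : (Finset.Ico m n : Finset ℕ) => (i:ℕ) < m + j), v i}
    with hMB
  have hMAmeas : MeasurableSet MA := by
    rw [hMA, show {v : (i : (Finset.range m : Finset ℕ)) → ℤ | ∀ i, v i = 1}
      = ⋂ i, (fun v : (i : (Finset.range m : Finset ℕ)) → ℤ => v i) ⁻¹' {1} by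
        ext v; simp]
    exact MeasurableSet.iInter (fun i => (measurable_pi_apply i) (measurableSet_singleton 1))
  have hMBmeas : MeasurableSet MB := by
    rw [hMB]
    apply MeasurableSet.biInter (Finset.Icc 1 N).countable_toSet
    intro j _
    apply measurableSet_le measurable_const
    exact Finset.measurable_sum _ (fun i _ => measurable_pi_apply i)
  have hAeq : (fun ω (i : (Finset.range m : Finset ℕ)) => X i ω) ⁻¹' MA = A := by
    ext ω
    simp only [hMA, hA, Set.mem_preimage, Set.mem_setOf_eq, Set.mem_iInter]
    constructor
    · intro h i hi
      exact h ⟨i, hi⟩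
    · intro h i
      exact h i i.2
  have hsumeq : ∀ (ω : Ω) (j : ℕ), j ∈ Finset.Icc 1 N →
      (∑ i ∈ Finset.univ.filter (fun i : (Finset.Ico m n : Finset ℕ) => (i:ℕ) < m + j),
        X (i : ℕ) ω) = ∑ i ∈ Finset.Ico m (m+j), X i ω := by
    intro ω j hj
    simp only [Finset.mem_Icc] at hj
    rw [Finset.sum_filter, Finset.univ_eq_attach, Finset.sum_attach (Finset.Ico m n)
      (fun i => if i < m + j then X i ω else 0), ← Finset.sum_filter]
    congr 1
    ext x
    simp only [Finset.mem_filter, Finset.mem_Ico]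
    omega
  have hBeq : (fun ω (i : (Finset.Ico m n : Finset ℕ)) => X i ω) ⁻¹' MB = B := by
    ext ω
    simp only [hMB, hB, Set.mem_preimage, Set.mem_iInter, Set.mem_setOf_eq]
    constructor
    · intro h j hj
      have := h j hj
      rwa [hsumeq ω j hj] at this
    · intro h j hj
      rw [hsumeq ω j hj]
      exact h j hj
  have hPAB : P (A ∩ B) = P A * P B := by
    rw [← hAeq, ← hBeq]
    exact hIF.measure_inter_preimage_eq_mul MA MB hMAmeas hMBmeas
  -- inclusion
  have hincl : A ∩ B ⊆ eventSet P X ε n ∪ (Good X)ᶜ := by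
    intro ω hω
    by_cases hg : ω ∈ Good X
    · left
      apply incl1 hg k r₀ hk
      · intro i hi
        have := hω.1
        rw [hA] at this
        simp only [Set.mem_iInter, Set.mem_setOf_eq] at this
        exact this i (Finset.mem_range.mpr hi)
      · intro j hj1 hj2
        have := hω.2
        rw [hB] at this
        simp only [Set.mem_iInter, Set.mem_setOf_eq] at this
        exact this j (Finset.mem_Icc.mpr ⟨hj1, hj2⟩)
      · exact hmn
      · exact_mod_cast hεm
    · right
      exact hg
  have hPevent : (ENNReal.ofReal pb) ^ m * (1/2) ≤ P (eventSet P X ε n) := by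
    calc (ENNReal.ofReal pb) ^ m * (1/2) ≤ P A * P B := by
          rw [hPA]
          gcongr
    _ = P (A ∩ B) := hPAB.symm
    _ ≤ P (eventSet P X ε n ∪ (Good X)ᶜ) := measure_mono hincl
    _ ≤ P (eventSet P X ε n) + P (Good X)ᶜ := measure_union_le _ _
    _ = P (eventSet P X ε n) := by
          rw [good_ae hmeas hdist hpb, add_zero]
  have h0pb : 0 < pb := hpb.1
  have hlhs : ((ENNReal.ofReal pb) ^ m * (1/2)).toReal = pb ^ m * (1/2) := by
    rw [ENNReal.toReal_mul, ENNReal.toReal_pow, ENNReal.toReal_ofReal h0pb.le]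
    norm_num
  have hPreal : pb ^ m * (1/2) ≤ (P (eventSet P X ε n)).toReal := by
    have := ENNReal.toReal_mono (measure_ne_top P _) hPevent
    rwa [hlhs] at this
  have hpos : (0:ℝ) < pb ^ m * (1/2) := by positivity
  unfold rate
  have hnR : (0:ℝ) < (n:ℝ) := by exact_mod_cast dblock_pos k
  have hlog : (m:ℝ) * Real.log pb + Real.log (1/2)
      ≤ Real.log (P (eventSet P X ε n)).toReal := by
    calc (m:ℝ) * Real.log pb + Real.log (1/2) = Real.log (pb ^ m * (1/2)) := by
          rw [Real.log_mul (by positivity) (by norm_num), Real.log_pow]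
    _ ≤ Real.log (P (eventSet P X ε n)).toReal := Real.log_le_log hpos hPreal
  calc ((cblock k + r₀ : ℝ) * Real.log pb + Real.log (1/2)) * (1/(n : ℝ))
      = (1/(n:ℝ)) * ((m:ℝ) * Real.log pb + Real.log (1/2)) := by
        rw [hm]; push_cast; ring
  _ ≤ (1/(n:ℝ)) * Real.log (P (eventSet P X ε n)).toReal :=
        mul_le_mul_of_nonneg_left hlog (by positivity)

end Prob6

section Prob7

open ProbabilityTheory
open Classical in
lemma fobs_zero_or_one (x : ℤ) : fobs x = 0 ∨ fobs x = 1 := by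
  unfold fobs; split
  · right; rfl
  · left; rfl

variable {Ω : Type*} [MeasurableSpace Ω] {P : Measure Ω} [IsProbabilityMeasure P]
  {pb : ℝ} {X : ℕ → Ω → ℤ}

open Classical in
lemma incl2 {ω : Ω} (hg : ω ∈ Good X) (k : ℕ) (hk : 2 ≤ k) {ε : ℝ}
    (hε1 : ε ≤ 1/2) (hεd : 1 ≤ ε * dblock (k-1)) (hn4 : 4 ≤ cblock k)
    (hω : ω ∈ eventSet P X ε (cblock k)) :
    (∑ i ∈ Finset.range (cblock k), (X i ω : ℝ)) ≤ 3 * ε * cblock k := by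
  set n := cblock k with hn
  have hn0 : 0 < n := cblock_pos k
  have hnR : (0:ℝ) < n := by exact_mod_cast hn0
  have hd0 : 0 < dblock (k-1) := dblock_pos _
  have hdR : (0:ℝ) < dblock (k-1) := by exact_mod_cast hd0
  have hε0 : 0 < ε := by
    by_contra h
    push_neg at h
    nlinarith
  have hsq : (n:ℝ) = (dblock (k-1) : ℝ)^2 := by
    have := cblock_succ (k-1) (by omega)
    rw [show k - 1 + 1 = k by omega] at this
    rw [hn, this]
    push_cast
    ring
  have hdn : (dblock (k-1) : ℝ) ≤ (n : ℝ) := by nlinarith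
  have hεn1 : 1 ≤ ε * n := by nlinarith
  have hεdn : (dblock (k-1) : ℝ) ≤ ε * n := by nlinarith
  -- sum of fobs > (1-ε) n
  have hSgt : (1 - ε) * n < ∑ j ∈ Finset.Icc 1 n, fobs (∑ i ∈ Finset.range j, X i ω) := by
    have := hω
    unfold eventSet at this
    simp only [Set.mem_setOf_eq] at this
    rw [abs_lt] at this
    have h1 := this.1
    have : (1 - ε) < (1/(n:ℝ)) * ∑ j ∈ Finset.Icc 1 n, fobs (∑ i ∈ Finset.range j, X i ω) := by
      linarith
    calc (1 - ε) * n < ((1/(n:ℝ)) * ∑ j ∈ Finset.Icc 1 n,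
          fobs (∑ i ∈ Finset.range j, X i ω)) * n := by
          exact mul_lt_mul_of_pos_right this hnR
    _ = ∑ j ∈ Finset.Icc 1 n, fobs (∑ i ∈ Finset.range j, X i ω) := by field_simp
  set G := (Finset.Icc 1 n).filter (fun j => fobs (∑ i ∈ Finset.range j, X i ω) = 1) with hG
  have hSGcard : (∑ j ∈ Finset.Icc 1 n, fobs (∑ i ∈ Finset.range j, X i ω)) = G.card := by
    rw [hG, ← Finset.sum_filter_add_sum_filter_not (Finset.Icc 1 n)
      (fun j => fobs (∑ i ∈ Finset.range j, X i ω) = 1)]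
    have h1 : ∑ j ∈ (Finset.Icc 1 n).filter
        (fun j => fobs (∑ i ∈ Finset.range j, X i ω) = 1),
        fobs (∑ i ∈ Finset.range j, X i ω)
        = ∑ j ∈ (Finset.Icc 1 n).filter
        (fun j => fobs (∑ i ∈ Finset.range j, X i ω) = 1), (1:ℝ) := by
      apply Finset.sum_congr rfl
      intro j hj
      exact (Finset.mem_filter.mp hj).2
    have h2 : ∑ j ∈ (Finset.Icc 1 n).filter
        (fun j => ¬ fobs (∑ i ∈ Finset.range j, X i ω) = 1),
        fobs (∑ i ∈ Finset.range j, X i ω) = 0 := by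
      apply Finset.sum_eq_zero
      intro j hj
      have := (Finset.mem_filter.mp hj).2
      rcases fobs_zero_or_one (∑ i ∈ Finset.range j, X i ω) with h | h
      · exact h
      · exact absurd h this
    rw [h1, h2]
    simp
  have hcardG : (1 - ε) * n < (G.card : ℝ) := by rw [← hSGcard]; exact hSgt
  have hcardG2 : 2 < (G.card : ℝ) := by nlinarith
  have hcardG2' : 2 < G.card := by exact_mod_cast hcardG2
  set G' := G.erase n with hG'
  have hcardG' : G.card - 1 ≤ G'.card := Finset.pred_card_le_card_erase
  have hG'ne : G'.Nonempty := by
    rw [← Finset.card_pos]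
    omega
  set M := G'.max' hG'ne with hM
  have hMG' : M ∈ G' := Finset.max'_mem _ _
  have hMG : M ∈ G := Finset.mem_of_mem_erase hMG'
  have hMne : M ≠ n := Finset.ne_of_mem_erase hMG'
  have hMIcc : M ∈ Finset.Icc 1 n := Finset.mem_filter.mp hMG |>.1
  have hM1 : 1 ≤ M := (Finset.mem_Icc.mp hMIcc).1
  have hMn : M < n := lt_of_le_of_ne (Finset.mem_Icc.mp hMIcc).2 hMne
  have hsubM : G' ⊆ Finset.Icc 1 M := by
    intro j hj
    have hjG := Finset.mem_of_mem_erase hj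
    have hjIcc := Finset.mem_filter.mp hjG |>.1
    rw [Finset.mem_Icc]
    exact ⟨(Finset.mem_Icc.mp hjIcc).1, Finset.le_max' _ j hj⟩
  have hcardM : (G'.card : ℝ) ≤ M := by
    have := Finset.card_le_card hsubM
    rw [Nat.card_Icc] at this
    have h2 : G'.card ≤ M := by omega
    exact_mod_cast h2
  have hMlb : (1 - ε) * n - 1 < (M : ℝ) := by
    have hc : (G.card : ℝ) ≤ (G'.card : ℝ) + 1 := by
      have hnat : G.card ≤ G'.card + 1 := by omega
      exact_mod_cast hnat
    linarith
  -- fobs (S_M) = 1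
  have hfM : fobs (∑ i ∈ Finset.range M, X i ω) = 1 := (Finset.mem_filter.mp hMG).2
  obtain ⟨m', hm'1, hm'2, hm'3⟩ := fobs_exists hfM
  have hSM_le : (∑ i ∈ Finset.range M, X i ω) ≤ (M : ℤ) := by
    have := sum_le_card_of_good hg (Finset.range M)
    simpa using this
  have hm'k : m' < k := by
    by_contra h
    push_neg at h
    have : (cblock k : ℤ) ≤ (cblock m' : ℤ) := by exact_mod_cast cblock_mono h
    have hnM : (M:ℤ) < (n:ℤ) := by exact_mod_cast hMn
    omega
  have hSM_d : (∑ i ∈ Finset.range M, X i ω) ≤ (dblock (k-1) : ℤ) := by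
    have : (dblock m' : ℤ) ≤ (dblock (k-1) : ℤ) := by
      exact_mod_cast dblock_mono (by omega : m' ≤ k - 1)
    omega
  -- S_n ≤ S_M + (n - M)
  have hSn : (∑ i ∈ Finset.range n, X i ω)
      ≤ (∑ i ∈ Finset.range M, X i ω) + ((n:ℤ) - M) := by
    have hsplit : (∑ i ∈ Finset.range n, X i ω)
        = (∑ i ∈ Finset.range M, X i ω) + ∑ i ∈ Finset.Ico M n, X i ω := by
      rw [Finset.range_eq_Ico]
      rw [Finset.range_eq_Ico]; exact (Finset.sum_Ico_consecutive (fun i => X i ω) (Nat.zero_le M) (show M ≤ n by omega)).symm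
    have htail : (∑ i ∈ Finset.Ico M n, X i ω) ≤ ((n:ℤ) - M) := by
      have := sum_le_card_of_good hg (Finset.Ico M n)
      rw [Nat.card_Ico] at this
      calc (∑ i ∈ Finset.Ico M n, X i ω) ≤ ((n - M : ℕ) : ℤ) := this
      _ = (n:ℤ) - M := by push_cast [hMn.le]; ring
    omega
  have hfinal : ((∑ i ∈ Finset.range n, X i ω : ℤ) : ℝ) < 3 * ε * n := by
    have hc1 : ((∑ i ∈ Finset.range n, X i ω : ℤ) : ℝ)
        ≤ (dblock (k-1) : ℝ) + ((n:ℝ) - M) := by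
      have := hSn
      have h2 : (∑ i ∈ Finset.range n, X i ω) ≤ (dblock (k-1) : ℤ) + ((n:ℤ) - M) := by omega
      calc ((∑ i ∈ Finset.range n, X i ω : ℤ) : ℝ)
          ≤ (((dblock (k-1) : ℤ) + ((n:ℤ) - M) : ℤ) : ℝ) := by exact_mod_cast h2
      _ = (dblock (k-1) : ℝ) + ((n:ℝ) - M) := by push_cast; ring
    have hc2 : (n:ℝ) - M < ε * n + 1 := by linarith
    calc ((∑ i ∈ Finset.range n, X i ω : ℤ) : ℝ) ≤ (dblock (k-1) : ℝ) + ((n:ℝ) - M) := hc1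
    _ < ε * n + (ε * n + 1) := by linarith
    _ ≤ ε * n + (ε * n + ε * n) := by linarith
    _ = 3 * ε * n := by ring
  calc (∑ i ∈ Finset.range n, (X i ω : ℝ)) = ((∑ i ∈ Finset.range n, X i ω : ℤ) : ℝ) := by
        push_cast; rfl
  _ ≤ 3 * ε * n := le_of_lt hfinal

end Prob7

section Prob8

open ProbabilityTheory

variable {Ω : Type*} [MeasurableSpace Ω] {P : Measure Ω} [IsProbabilityMeasure P]
  {pb : ℝ} {X : ℕ → Ω → ℤ}

lemma event_pos (hindep : ProbabilityTheory.iIndepFun X P)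
    (hdist : ∀ i, P {ω | X i ω = 1} = ENNReal.ofReal pb ∧
      P {ω | X i ω = -1} = ENNReal.ofReal (1 - pb))
    (hpb : pb ∈ Set.Ioo (0:ℝ) 1) (hpb2 : 1/2 < pb)
    {ε : ℝ} (hε : 0 < ε) (n : ℕ) (hn : 1 ≤ n) :
    0 < (P (eventSet P X ε n)).toReal := by
  have h1pb : 0 < 1 - pb := by linarith [hpb.2]
  have hsub : (⋂ i ∈ Finset.range n, {ω | X i ω = epath i}) ⊆ eventSet P X ε n := by
    intro ω hω
    simp only [Set.mem_iInter, Set.mem_setOf_eq] at hω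
    have hwalk : ∀ j ∈ Finset.Icc 1 n, fobs (∑ i ∈ Finset.range j, X i ω) = 1 := by
      intro j hj
      simp only [Finset.mem_Icc] at hj
      have : (∑ i ∈ Finset.range j, X i ω) = ∑ i ∈ Finset.range j, epath i := by
        apply Finset.sum_congr rfl
        intro i hi
        simp only [Finset.mem_range] at hi
        exact hω i (Finset.mem_range.mpr (by omega))
      rw [this, epath_sum j hj.1]
      apply fobs_eq_one
      refine ⟨1, le_refl 1, ?_, ?_⟩
      · show (cblock 1 : ℤ) ≤ _
        rw [show cblock 1 = 1 from rfl]
        split <;> omega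
      · show _ ≤ (dblock 1 : ℤ)
        rw [show dblock 1 = 2 from rfl]
        split <;> omega
    have hsum : (∑ j ∈ Finset.Icc 1 n, fobs (∑ i ∈ Finset.range j, X i ω)) = n := by
      rw [Finset.sum_congr rfl hwalk]
      simp [Nat.card_Icc]
    show ω ∈ eventSet P X ε n
    unfold eventSet
    simp only [Set.mem_setOf_eq]
    rw [hsum]
    have hn' : (n : ℝ) ≠ 0 := Nat.cast_ne_zero.mpr (by omega)
    rw [show (1 / (n:ℝ)) * n - 1 = 0 by field_simp; norm_num]
    simpa using hε
  have hcylP : ENNReal.ofReal ((1 - pb)^n) ≤ P (⋂ i ∈ Finset.range n, {ω | X i ω = epath i}) := by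
    rw [meas_cyl hindep epath (Finset.range n)]
    have : ∀ i ∈ Finset.range n, ENNReal.ofReal (1 - pb) ≤ P {ω | X i ω = epath i} := by
      intro i _
      unfold epath
      split
      · rw [(hdist i).1]
        exact ENNReal.ofReal_le_ofReal (by linarith [hpb.1, hpb2])
      · split
        · rw [(hdist i).1]
          exact ENNReal.ofReal_le_ofReal (by linarith [hpb.1, hpb2])
        · rw [(hdist i).2]
    calc ENNReal.ofReal ((1 - pb)^n) = (ENNReal.ofReal (1 - pb))^n := by
          rw [ENNReal.ofReal_pow h1pb.le]
    _ = ∏ _i ∈ Finset.range n, ENNReal.ofReal (1 - pb) := by simp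
    _ ≤ ∏ i ∈ Finset.range n, P {ω | X i ω = epath i} := Finset.prod_le_prod' this
  have hP : ENNReal.ofReal ((1 - pb)^n) ≤ P (eventSet P X ε n) :=
    le_trans hcylP (measure_mono hsub)
  have hPreal : (1 - pb)^n ≤ (P (eventSet P X ε n)).toReal := by
    have := ENNReal.toReal_mono (measure_ne_top P _) hP
    rwa [ENNReal.toReal_ofReal (by positivity)] at this
  have : (0:ℝ) < (1-pb)^n := by positivity
  linarith

lemma rate_cblock_ub (hmeas : ∀ i, Measurable (X i))
    (hindep : ProbabilityTheory.iIndepFun X P)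
    (hdist : ∀ i, P {ω | X i ω = 1} = ENNReal.ofReal pb ∧
      P {ω | X i ω = -1} = ENNReal.ofReal (1 - pb))
    (hpb : pb ∈ Set.Ioo (0:ℝ) 1) (hpb2 : 1/2 < pb)
    (k : ℕ) (hk : 2 ≤ k) {ε : ℝ} (hε0 : 0 < ε) (hε1 : ε ≤ 1/2)
    (hεd : 1 ≤ ε * dblock (k-1)) (hn4 : 4 ≤ cblock k) :
    rate P X ε (cblock k) ≤ 3 * ε * lam0 pb + Real.log (qval pb) := by
  set n := cblock k with hn
  have hn0 : 0 < n := cblock_pos k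
  have hnR : (0:ℝ) < n := by exact_mod_cast hn0
  have hq0 := qval_pos hpb.1 hpb.2
  -- inclusion into the Chernoff event
  have hincl : eventSet P X ε n ⊆
      {ω | (∑ i ∈ Finset.range n, (X i ω : ℝ)) ≤ 3 * ε * n} ∪ (Good X)ᶜ := by
    intro ω hω
    by_cases hg : ω ∈ Good X
    · left
      exact incl2 hg k hk hε1 hεd hn4 hω
    · right
      exact hg
  have hcher := chernoff hmeas hindep hdist hpb hpb2 (Finset.range n) (3 * ε * n)
  rw [Finset.card_range] at hcher
  have hPle : (P (eventSet P X ε n)).toReal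
      ≤ Real.exp (lam0 pb * (3 * ε * n)) * qval pb ^ n := by
    have h1 : P (eventSet P X ε n)
        ≤ P {ω | (∑ i ∈ Finset.range n, (X i ω : ℝ)) ≤ 3 * ε * n} := by
      calc P (eventSet P X ε n)
          ≤ P ({ω | (∑ i ∈ Finset.range n, (X i ω : ℝ)) ≤ 3 * ε * n} ∪ (Good X)ᶜ) :=
            measure_mono hincl
      _ ≤ P {ω | (∑ i ∈ Finset.range n, (X i ω : ℝ)) ≤ 3 * ε * n} + P (Good X)ᶜ :=
            measure_union_le _ _
      _ = P {ω | (∑ i ∈ Finset.range n, (X i ω : ℝ)) ≤ 3 * ε * n} := by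
            rw [good_ae hmeas hdist hpb, add_zero]
    calc (P (eventSet P X ε n)).toReal
        ≤ (P {ω | (∑ i ∈ Finset.range n, (X i ω : ℝ)) ≤ 3 * ε * n}).toReal :=
          ENNReal.toReal_mono (measure_ne_top _ _) h1
    _ ≤ Real.exp (lam0 pb * (3 * ε * n)) * qval pb ^ n := hcher
  have hpos := event_pos hindep hdist hpb hpb2 hε0 n hn0
  unfold rate
  have hlog : Real.log (P (eventSet P X ε n)).toReal
      ≤ lam0 pb * (3 * ε * n) + n * Real.log (qval pb) := by
    calc Real.log (P (eventSet P X ε n)).toReal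
        ≤ Real.log (Real.exp (lam0 pb * (3 * ε * n)) * qval pb ^ n) :=
          Real.log_le_log hpos hPle
    _ = lam0 pb * (3 * ε * n) + n * Real.log (qval pb) := by
        rw [Real.log_mul (Real.exp_ne_zero _) (by positivity), Real.log_exp, Real.log_pow]
  calc (1/(n:ℝ)) * Real.log (P (eventSet P X ε n)).toReal
      ≤ (1/(n:ℝ)) * (lam0 pb * (3 * ε * n) + n * Real.log (qval pb)) :=
        mul_le_mul_of_nonneg_left hlog (by positivity)
  _ = 3 * ε * lam0 pb + Real.log (qval pb) := by field_simp

end Prob8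



set_option maxHeartbeats 1000000 in
/-- No full LDP for the empirical means of the bounded observable `f` along the drifted
simple random walk: the `ε → 0⁺` limit of the `lim sup` rates is `0`, while the `ε → 0⁺`
limit of the `lim inf` rates is at most `−Λ*(0) < 0`. -/
theorem no_LDP_for_bounded_observable
    {Ω : Type*} [MeasurableSpace Ω] (P : Measure Ω) [IsProbabilityMeasure P]
    (pb : ℝ) (hpb : pb ∈ Set.Ioo (0 : ℝ) 1) (hpb2 : 1 / 2 < pb)
    (X : ℕ → Ω → ℤ) (hmeas : ∀ i, Measurable (X i))
    (hindep : ProbabilityTheory.iIndepFun X P)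
    (hdist : ∀ i, P {ω | X i ω = 1} = ENNReal.ofReal pb ∧
      P {ω | X i ω = -1} = ENNReal.ofReal (1 - pb)) :
    (⨅ ε : {e : ℝ // 0 < e}, atTop.limsup (fun n : ℕ => (1 / (n : ℝ)) *
        Real.log (P {ω | |(1 / (n : ℝ)) *
          (∑ j ∈ Finset.Icc 1 n, fobs (∑ i ∈ Finset.range j, X i ω)) - 1|
            < ε.1}).toReal)) = 0 ∧
    (⨅ ε : {e : ℝ // 0 < e}, atTop.liminf (fun n : ℕ => (1 / (n : ℝ)) *
        Real.log (P {ω | |(1 / (n : ℝ)) *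
          (∑ j ∈ Finset.Icc 1 n, fobs (∑ i ∈ Finset.range j, X i ω)) - 1|
            < ε.1}).toReal))
      ≤ -(⨆ l : ℝ, -(Real.log (pb * Real.exp l + (1 - pb) * Real.exp (-l)))) ∧
    0 < ⨆ l : ℝ, -(Real.log (pb * Real.exp l + (1 - pb) * Real.exp (-l))) := by
  have h0 := hpb.1
  have h1 := hpb.2
  have h1pb : (0:ℝ) < 1 - pb := by linarith
  have hlogpb : Real.log pb < 0 := Real.log_neg h0 h1
  have hlog1pb : Real.log (1 - pb) < 0 := Real.log_neg h1pb (by linarith)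
  have hq0 := qval_pos h0 h1
  have hq1 := qval_lt_one h0 h1 hpb2
  have hlam := lam0_pos h0 h1 hpb2
  obtain ⟨r₀, hr₀⟩ := exists_r0 (pb := pb) hpb hpb2
  have hNE : Nonempty {e : ℝ // 0 < e} := ⟨⟨1, one_pos⟩⟩
  -- boundedness facts
  have hub : ∀ (ε : ℝ) (n : ℕ), rate P X ε n ≤ 0 := fun ε n => rate_le_zero ε n
  have hlb : ∀ (ε : ℝ), 0 < ε → ∀ (n : ℕ), Real.log (1 - pb) ≤ rate P X ε n :=
    fun ε hε n => log_le_rate hindep hdist hpb hpb2 hε n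
  refine ⟨?_, ?_, Lambda_pos h0 h1 hpb2⟩
  · -- PART 1
    show (⨅ ε : {e : ℝ // 0 < e}, atTop.limsup (fun n : ℕ => rate P X ε.1 n)) = 0
    have hconst : ∀ ε : {e : ℝ // 0 < e},
        atTop.limsup (fun n : ℕ => rate P X ε.1 n) = 0 := by
      intro ε
      have hbdd : atTop.IsBoundedUnder (· ≤ ·) (fun n : ℕ => rate P X ε.1 n) :=
        Filter.isBoundedUnder_of ⟨0, fun n => hub ε.1 n⟩
      apply le_antisymm
      · apply Filter.limsup_le_of_le
        · exact (Filter.isBoundedUnder_of (f := atTop)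
            (u := fun n : ℕ => rate P X ε.1 n) (r := (· ≥ ·))
            ⟨Real.log (1 - pb), fun n => hlb ε.1 ε.2 n⟩).isCoboundedUnder_le
        · exact Filter.Eventually.of_forall (fun n => hub ε.1 n)
      · -- frequently bound from below
        have hfreq : ∀ c : ℝ, c < 0 → ∃ᶠ n in atTop, c ≤ rate P X ε.1 n := by
          intro c hc
          rw [Filter.frequently_atTop]
          intro N
          set K := ((1:ℝ) + r₀) * |Real.log pb| + Real.log 2 with hK
          have hK0 : 0 < K := by
            have : (0:ℝ) < Real.log 2 := Real.log_pos (by norm_num)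
            have h2 : (0:ℝ) ≤ ((1:ℝ) + r₀) * |Real.log pb| := by positivity
            linarith
          obtain ⟨k1, hk1⟩ := exists_nat_gt ((1 + (r₀:ℝ)) / ε.1)
          obtain ⟨k2, hk2⟩ := exists_nat_gt (K / (-c))
          set k := max (max r₀ N) (max k1 k2) + 1 with hk
          have hkr : r₀ ≤ k := by omega
          have hkN : N ≤ k := by omega
          have hkk1 : k1 ≤ k := by omega
          have hkk2 : k2 ≤ k := by omega
          have hk1' : 1 ≤ k := by omega
          have hck : 1 ≤ cblock k := cblock_pos k
          have hckR : (1:ℝ) ≤ cblock k := by exact_mod_cast hck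
          have hdk : dblock k = (k+1) * cblock k := rfl
          have hdkR : (dblock k : ℝ) = (k+1) * cblock k := by rw [hdk]; push_cast; ring
          have hdkpos : (0:ℝ) < dblock k := by exact_mod_cast dblock_pos k
          -- condition (ii)
          have hmn : cblock k + r₀ ≤ dblock k := by
            rw [hdk]
            nlinarith [hck, hkr]
          -- condition (iii)
          have hεk : (1 + (r₀:ℝ)) < ε.1 * (k+1) := by
            rw [div_lt_iff₀ ε.2] at hk1
            have : (k1:ℝ) ≤ k := by exact_mod_cast hkk1
            nlinarith [ε.2]
          have hεm : (cblock k + r₀ : ℝ) < ε.1 * dblock k := by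
            have e1 : (cblock k : ℝ) + r₀ ≤ (cblock k) * (1 + r₀) := by nlinarith
            have e2 : (cblock k : ℝ) * (1 + r₀) < (cblock k) * (ε.1 * (k+1)) := by
              apply mul_lt_mul_of_pos_left hεk (by linarith)
            calc (cblock k : ℝ) + r₀ ≤ (cblock k) * (1 + r₀) := e1
            _ < (cblock k : ℝ) * (ε.1 * (k+1)) := e2
            _ = ε.1 * ((k+1) * cblock k) := by ring
            _ = ε.1 * dblock k := by rw [hdkR]
          have hrate := rate_dblock_lb hmeas hindep hdist hpb hpb2 r₀ hr₀ k hk1' hmn hεm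
          -- condition (iv) : lower bound the explicit quantity by c
          have hb : c ≤ ((cblock k + r₀ : ℝ) * Real.log pb + Real.log (1/2))
              * (1/(dblock k : ℝ)) := by
            have hnum : -((cblock k : ℝ) * K) ≤
                (cblock k + r₀ : ℝ) * Real.log pb + Real.log (1/2) := by
              rw [hK]
              have e1 : (cblock k + r₀ : ℝ) * Real.log pb
                  ≥ -((cblock k : ℝ) * ((1 + r₀) * |Real.log pb|)) := by
                have habs : Real.log pb = -|Real.log pb| := by
                  rw [abs_of_neg hlogpb]; ring
                have e2 : (cblock k + r₀ : ℝ) ≤ (cblock k) * (1 + r₀) := by nlinarith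
                have e3 : (0:ℝ) ≤ |Real.log pb| := abs_nonneg _
                nlinarith [mul_le_mul_of_nonneg_right e2 e3, habs]
              have e4 : Real.log (1/2) = -Real.log 2 := by
                rw [one_div, Real.log_inv]
              have e5 : Real.log 2 ≤ (cblock k : ℝ) * Real.log 2 := by
                nlinarith [Real.log_pos (show (1:ℝ) < 2 by norm_num)]
              rw [e4]
              nlinarith
            have hKk : K / (k+1 : ℝ) ≤ -c := by
              rw [div_le_iff₀ (by positivity)]
              rw [div_lt_iff₀ (by linarith) ] at hk2
              have : (k2:ℝ) ≤ k := by exact_mod_cast hkk2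
              nlinarith
            have hform : -((cblock k : ℝ) * K) * (1/(dblock k : ℝ)) = -(K/(k+1)) := by
              rw [hdkR]
              field_simp
            calc c = -(-c) := by ring
            _ ≤ -(K/(k+1)) := by
                have : K/(k+1 : ℝ) ≤ -c := hKk
                linarith
            _ = -((cblock k : ℝ) * K) * (1/(dblock k : ℝ)) := hform.symm
            _ ≤ ((cblock k + r₀ : ℝ) * Real.log pb + Real.log (1/2))
                * (1/(dblock k : ℝ)) := by
                apply mul_le_mul_of_nonneg_right hnum (by positivity)
          refine ⟨dblock k, ?_, le_trans hb hrate⟩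
          calc N ≤ k := hkN
          _ ≤ k + 1 := by omega
          _ ≤ dblock k := succ_le_dblock k
        by_contra hneg
        push_neg at hneg
        set L := atTop.limsup (fun n : ℕ => rate P X ε.1 n) with hL
        have hc : L / 2 < 0 := by linarith
        have hcL : L < L/2 := by linarith
        have := Filter.le_limsup_of_frequently_le (hfreq (L/2) hc) hbdd
        rw [← hL] at this
        linarith
    rw [iInf_congr hconst]
    exact ciInf_const
  · -- PART 2
    show (⨅ ε : {e : ℝ // 0 < e}, atTop.liminf (fun n : ℕ => rate P X ε.1 n))
      ≤ -(⨆ l : ℝ, -(Real.log (pb * Real.exp l + (1 - pb) * Real.exp (-l))))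
    rw [Lambda_eq h0 h1 hpb2, neg_neg]
    have hBddBelow : BddBelow (Set.range
        (fun ε : {e : ℝ // 0 < e} => atTop.liminf (fun n : ℕ => rate P X ε.1 n))) := by
      refine ⟨Real.log (1 - pb), ?_⟩
      rintro x ⟨ε, rfl⟩
      apply Filter.le_liminf_of_le
      · exact (Filter.isBoundedUnder_of ⟨0, fun n => hub ε.1 n⟩).isCoboundedUnder_ge
      · exact Filter.Eventually.of_forall (fun n => hlb ε.1 ε.2 n)
    have hkey : ∀ η : ℝ, 0 < η →
        (⨅ ε : {e : ℝ // 0 < e}, atTop.liminf (fun n : ℕ => rate P X ε.1 n))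
          ≤ Real.log (qval pb) + η := by
      intro η hη
      set ε : ℝ := min (η / (3 * lam0 pb)) (1/2) with hεdef
      have hε0 : 0 < ε := by
        apply lt_min (by positivity) (by norm_num)
      have hε1 : ε ≤ 1/2 := min_le_right _ _
      have hε2 : 3 * ε * lam0 pb ≤ η := by
        have h3 : ε ≤ η / (3 * lam0 pb) := min_le_left _ _
        calc 3 * ε * lam0 pb ≤ 3 * (η / (3 * lam0 pb)) * lam0 pb := by nlinarith
        _ = η := by field_simp
      have hfreq : ∃ᶠ n in atTop,
          rate P X ε n ≤ 3 * ε * lam0 pb + Real.log (qval pb) := by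
        rw [Filter.frequently_atTop]
        intro N
        obtain ⟨k0, hk0⟩ := exists_nat_gt (1 / ε)
        set k := max (max 2 N) (max k0 4) + 1 with hk
        have hk2 : 2 ≤ k := by omega
        have hkd : k ≤ dblock (k-1) := by
          have := succ_le_dblock (k-1)
          omega
        have hkc : k ≤ cblock k := by
          have hsq : cblock k = dblock (k-1)^2 := by
            have := cblock_succ (k-1) (by omega)
            rwa [show k-1+1 = k by omega] at this
          have h2 : dblock (k-1) ≤ cblock k := by
            rw [hsq]
            nlinarith [dblock_pos (k-1)]
          omega
        have hεd : 1 ≤ ε * dblock (k-1) := by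
          have hkk0 : (k0 : ℝ) ≤ dblock (k-1) := by
            have : k0 ≤ dblock (k-1) := by omega
            exact_mod_cast this
          rw [div_lt_iff₀ hε0] at hk0
          nlinarith
        have hn4 : 4 ≤ cblock k := by omega
        refine ⟨cblock k, by omega, ?_⟩
        exact rate_cblock_ub hmeas hindep hdist hpb hpb2 k hk2 hε0 hε1 hεd hn4
      have hliminf : atTop.liminf (fun n : ℕ => rate P X ε n)
          ≤ 3 * ε * lam0 pb + Real.log (qval pb) := by
        exact Filter.liminf_le_of_frequently_le hfreq
          (Filter.isBoundedUnder_of ⟨Real.log (1 - pb), fun n => hlb ε hε0 n⟩)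
      calc (⨅ ε' : {e : ℝ // 0 < e}, atTop.liminf (fun n : ℕ => rate P X ε'.1 n))
          ≤ atTop.liminf (fun n : ℕ => rate P X ε n) :=
            ciInf_le hBddBelow ⟨ε, hε0⟩
      _ ≤ 3 * ε * lam0 pb + Real.log (qval pb) := hliminf
      _ ≤ Real.log (qval pb) + η := by linarith
    by_contra hcon
    push_neg at hcon
    set I := (⨅ ε : {e : ℝ // 0 < e}, atTop.liminf (fun n : ℕ => rate P X ε.1 n)) with hI
    have hη : 0 < (I - Real.log (qval pb)) / 2 := by linarith
    have := hkey _ hη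
    linarith
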